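/- arXiv:1404.6751 — 3 statements merged into one kernel-verified Lean document; each statement's English description precedes it below -/
import Mathlib

section
/- Let z = (x,s) and z' = (y,t) be elements of the Heisenberg group ℍ (over a complex Hilbert space) with δ ∈ (0, 10⁻¹⁰⁰), such that N(z) = 1, N(z') ∈ [(1−δ)², (1+δ)²], and d(z,z') ∈ [2(1−δ)², 2(1+δ)²]. Then the exterior angle θ between x and y satisfies |θ| ≤ 400·δ^{1/2}, and NH(z)/N(z) ≤ 20·δ^{1/4} and NH(z')/N(z') ≤ 20·δ^{1/4}. -/
variable {H : Type*} [NormedAddCommGroup H] [InnerProductSpace ℂ H]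

/-- The canonical symplectic form `ω(x,y) = Im ⟪x, y⟫` on a complex Hilbert space. -/
noncomputable def symp (x y : H) : ℝ := (inner ℂ x y : ℂ).im

/-- Group product of the Heisenberg group `H × ℝ`. -/
noncomputable def Hmul (a b : H × ℝ) : H × ℝ :=
  (a.1 + b.1, a.2 + b.2 + symp a.1 b.1 / 2)

/-- Group inverse. -/
noncomputable def Hinv (a : H × ℝ) : H × ℝ := (-a.1, -a.2)

/-- The Koranyi norm. -/
noncomputable def KN (a : H × ℝ) : ℝ := (‖a.1‖ ^ 4 + a.2 ^ 2) ^ ((1 : ℝ) / 4)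

/-- The Koranyi metric. -/
noncomputable def Kd (g h : H × ℝ) : ℝ := KN (Hmul (Hinv g) h)

/-- Non-horizontality `NH(x,t) = |t|^(1/2)`. -/
noncomputable def NH (a : H × ℝ) : ℝ := |a.2| ^ ((1 : ℝ) / 2)

set_option maxHeartbeats 2000000 in
/-- The real-arithmetic core of the small-angle lemma. -/
lemma stmt11_key (δ A B C s t p ω : ℝ)
    (hδ0 : 0 < δ) (hδ1 : δ ≤ 1/1000)
    (hA : 0 ≤ A) (hB : 0 ≤ B)
    (h1 : A^4 + s^2 = 1)
    (h2l : (1-δ)^8 ≤ B^4 + t^2) (h2u : B^4 + t^2 ≤ (1+δ)^8)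
    (h3l : 16*(1-δ)^8 ≤ C^4 + (t - s - ω/2)^2)
    (h4 : C^2 = A^2 + B^2 - 2*p)
    (h5 : p^2 + ω^2 ≤ A^2 * B^2) :
    s^2 ≤ 100*δ ∧ t^2 ≤ 100*δ ∧ A*B + p ≤ 100*δ ∧ 1/2 ≤ A ∧ 1/2 ≤ B := by
  have e1 : 1 - 8*δ ≤ (1-δ)^8 := by
    have hb := one_add_mul_le_pow (show (-2:ℝ) ≤ -δ by linarith) 8
    push_cast at hb
    have he : ((1:ℝ) + -δ)^8 = (1-δ)^8 := by ring
    linarith [hb, he.le, he.ge]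
  have e2 : (1+δ)^8 ≤ 1 + 15*δ := by
    have a2 : (1+δ)^2 ≤ 1 + 3*δ := by nlinarith
    have a4 : (1+δ)^4 ≤ 1 + 7*δ := by
      have := pow_le_pow_left₀ (by positivity : (0:ℝ) ≤ (1+δ)^2) a2 2
      nlinarith [this]
    have := pow_le_pow_left₀ (by positivity : (0:ℝ) ≤ (1+δ)^4) a4 2
    nlinarith [this]
  have h2l' : 1 - 8*δ ≤ B^4 + t^2 := le_trans e1 h2l
  have h2u' : B^4 + t^2 ≤ 1 + 15*δ := le_trans h2u e2
  have h3l' : 16 - 128*δ ≤ C^4 + (t - s - ω/2)^2 := by linarith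
  clear h2l h2u h3l e1 e2
  have hs1 : s^2 ≤ 1 := by nlinarith [pow_nonneg hA 4]
  have hA4 : A^4 ≤ 1 := by nlinarith [sq_nonneg s]
  have hA1 : A ≤ 1 := by
    by_contra h
    push_neg at h
    have := one_lt_pow₀ h (by norm_num : (4:ℕ) ≠ 0)
    linarith
  have hB1 : B ≤ 51/50 := by
    by_contra h
    push_neg at h
    have h2 : (51/50:ℝ)^4 < B^4 :=
      pow_lt_pow_left₀ h (by norm_num : (0:ℝ) ≤ 51/50) (by norm_num : (4:ℕ) ≠ 0)
    nlinarith [sq_nonneg t]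
  have ht2 : t^2 ≤ 1 + 15*δ := by nlinarith [pow_nonneg hB 4]
  have hAB1 : A*B ≤ 51/50 := by nlinarith
  have hABnn : 0 ≤ A*B := mul_nonneg hA hB
  have hABsq : (A*B)^2 ≤ (51/50)^2 := pow_le_pow_left₀ hABnn hAB1 2
  have hω2 : ω^2 ≤ (51/50)^2 := by nlinarith [sq_nonneg p]
  have hu2 : (t - s - ω/2)^2 ≤ 7 := by
    nlinarith [sq_nonneg (t+s), sq_nonneg (t+ω/2), sq_nonneg (s-ω/2)]
  have hC2 : 29/10 ≤ C^2 := by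
    by_contra h
    push_neg at h
    have hC4 : C^4 < (29/10)^2 := by nlinarith [sq_nonneg C]
    nlinarith
  have hpu : p ≤ A*B := by nlinarith [sq_nonneg (A*B - p), sq_nonneg ω]
  have hpl : -(A*B) ≤ p := by nlinarith [sq_nonneg (A*B + p), sq_nonneg ω]
  have hF0 : 0 ≤ A*B + p := by linarith
  have hFS : 2*(A*B + p) ≤ (A+B)^2 := by nlinarith [sq_nonneg (A-B)]
  have hCsq : C^2 = (A+B)^2 - 2*(A*B + p) := by rw [h4]; ring
  have hs2 : (A+B)^2 ≤ 2*(A^2+B^2) := by nlinarith [sq_nonneg (A-B)]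
  have hS4 : (A+B)^4 ≤ 8*(A^4+B^4) := by
    have h9 : ((A+B)^2)^2 ≤ (2*(A^2+B^2))^2 :=
      pow_le_pow_left₀ (by positivity) hs2 2
    linarith [h9, sq_nonneg (A^2-B^2)]
  have hC4e : C^4 = ((A+B)^2 - 2*(A*B+p))^2 := by
    rw [show C^4 = (C^2)^2 by ring, hCsq]
  have hC4u : C^4 ≤ (A+B)^4 - (A+B)^2 * (2*(A*B+p)) := by
    have h6 : 0 ≤ 2*(A*B+p) * ((A+B)^2 - 2*(A*B+p)) :=
      mul_nonneg (by linarith) (by linarith)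
    linarith [hC4e.le, hC4e.ge, h6]
  have hωF : ω^2 ≤ (51/25)*(A*B+p) := by
    have h7 : A*B - p ≤ 51/25 := by linarith
    linarith [h5, mul_le_mul_of_nonneg_right h7 hF0]
  have hu2' : (t - s - ω/2)^2 ≤ 4*s^2 + 4*t^2 + ω^2/2 := by
    linarith [sq_nonneg (t-s+ω/2), sq_nonneg (t+s)]
  have hS2 : 29/10 ≤ (A+B)^2 := by linarith [hCsq.le, hCsq.ge, hC2, hF0]
  have hSF : (29/10)*(2*(A*B+p)) ≤ (A+B)^2 * (2*(A*B+p)) :=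
    mul_le_mul_of_nonneg_right hS2 (by linarith)
  have main : 4*s^2 + 4*t^2 + (239/50)*(A*B+p) ≤ 248*δ := by
    linarith only [h3l', hC4u, hu2', hωF, hS4, hSF, h2u', h1, hδ0]
  refine ⟨by linarith only [main, sq_nonneg t, hF0, hδ0],
    by linarith only [main, sq_nonneg s, hF0, hδ0],
    by linarith only [main, sq_nonneg s, sq_nonneg t, hδ0], ?_, ?_⟩
  · by_contra h
    push_neg at h
    have h8 : A^4 < (1/2)^4 := pow_lt_pow_left₀ h hA (by norm_num : (4:ℕ) ≠ 0)
    have h9 : s^2 ≤ 100*δ := by linarith only [main, sq_nonneg t, hF0, hδ0]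
    norm_num at h8
    linarith only [h8, h1, h9, hδ1]
  · by_contra h
    push_neg at h
    have h8 : B^4 < (1/2)^4 := pow_lt_pow_left₀ h hB (by norm_num : (4:ℕ) ≠ 0)
    have h9 : t^2 ≤ 100*δ := by linarith only [main, sq_nonneg s, hF0, hδ0]
    norm_num at h8
    linarith only [h8, h2l', h9, hδ1]

lemma stmt11_quart_le {a b : ℝ} (ha : 0 ≤ a) (h : a ^ ((1:ℝ)/4) ≤ b) : a ≤ b ^ 4 := by
  have h0 : (0:ℝ) ≤ a ^ ((1:ℝ)/4) := Real.rpow_nonneg ha _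
  have h2 : (a ^ ((1:ℝ)/4)) ^ (4:ℕ) ≤ b ^ (4:ℕ) := pow_le_pow_left₀ h0 h 4
  rwa [← Real.rpow_natCast (a ^ ((1:ℝ)/4)) 4, ← Real.rpow_mul ha,
    show (1:ℝ)/4 * ((4:ℕ):ℝ) = 1 by push_cast; ring, Real.rpow_one] at h2

lemma stmt11_le_quart {a b : ℝ} (ha : 0 ≤ a) (hb : 0 ≤ b) (h : b ≤ a ^ ((1:ℝ)/4)) :
    b ^ 4 ≤ a := by
  have h2 : b ^ (4:ℕ) ≤ (a ^ ((1:ℝ)/4)) ^ (4:ℕ) := pow_le_pow_left₀ hb h 4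
  rwa [← Real.rpow_natCast (a ^ ((1:ℝ)/4)) 4, ← Real.rpow_mul ha,
    show (1:ℝ)/4 * ((4:ℕ):ℝ) = 1 by push_cast; ring, Real.rpow_one] at h2

lemma stmt11_quarter_half {r δ c : ℝ} (hδ : 0 ≤ δ) (hc : 0 ≤ c) (h : r^2 ≤ c^4 * δ) :
    |r| ^ ((1:ℝ)/2) ≤ c * δ ^ ((1:ℝ)/4) := by
  have hm : (0:ℝ) ≤ c^2 * δ ^ ((1:ℝ)/2) := by positivity
  have h1 : |r| ≤ c^2 * δ ^ ((1:ℝ)/2) := by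
    have hsq : |r|^2 ≤ (c^2 * δ ^ ((1:ℝ)/2))^2 := by
      rw [sq_abs]
      calc r^2 ≤ c^4 * δ := h
      _ = (c^2 * δ ^ ((1:ℝ)/2))^2 := by
          rw [mul_pow, ← Real.rpow_natCast (δ ^ ((1:ℝ)/2)) 2, ← Real.rpow_mul hδ,
            show (1:ℝ)/2 * ((2:ℕ):ℝ) = 1 by push_cast; ring, Real.rpow_one]
          ring
    exact (pow_le_pow_iff_left₀ (abs_nonneg r) hm (by norm_num)).mp hsq
  calc |r| ^ ((1:ℝ)/2) ≤ (c^2 * δ ^ ((1:ℝ)/2)) ^ ((1:ℝ)/2) :=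
        Real.rpow_le_rpow (abs_nonneg r) h1 (by norm_num)
  _ = c * δ ^ ((1:ℝ)/4) := by
      rw [Real.mul_rpow (by positivity) (by positivity),
        ← Real.rpow_natCast c 2, ← Real.rpow_mul hc, ← Real.rpow_mul hδ,
        show ((2:ℕ):ℝ) * ((1:ℝ)/2) = 1 by push_cast; ring, Real.rpow_one,
        show (1:ℝ)/2 * ((1:ℝ)/2) = (1:ℝ)/4 by norm_num]

set_option maxHeartbeats 2000000 in
/-- the small-angle lemma.  The exterior angle between `x` and `y`
is `θ = arccos (-Re ⟪x,y⟫ / (‖x‖ * ‖y‖))`. -/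
theorem stmt_11 (δ : ℝ) (hδ : δ ∈ Set.Ioo (0:ℝ) (10 ^ (-(100:ℤ)) : ℝ))
    (z z' : H × ℝ) (hz : KN z = 1)
    (hz' : KN z' ∈ Set.Icc ((1 - δ) ^ 2) ((1 + δ) ^ 2))
    (hd : Kd z z' ∈ Set.Icc (2 * (1 - δ) ^ 2) (2 * (1 + δ) ^ 2)) :
    |Real.arccos (-(inner ℂ z.1 z'.1 : ℂ).re / (‖z.1‖ * ‖z'.1‖))| ≤ 400 * δ ^ ((1:ℝ)/2) ∧
    NH z / KN z ≤ 20 * δ ^ ((1:ℝ)/4) ∧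
    NH z' / KN z' ≤ 20 * δ ^ ((1:ℝ)/4) := by
  obtain ⟨hδ0, hδu⟩ := hδ
  have hδ6 : δ ≤ 1/1000000 :=
    le_trans hδu.le (by norm_num)
  have hδ1 : δ ≤ 1/1000 := by linarith
  set A := ‖z.1‖ with hAdef
  set B := ‖z'.1‖ with hBdef
  set s := z.2 with hsdef
  set t := z'.2 with htdef
  set p := (inner ℂ z.1 z'.1 : ℂ).re with hpdef
  set ω := (inner ℂ z.1 z'.1 : ℂ).im with hωdef
  set C := ‖z'.1 - z.1‖ with hCdef
  -- extract polynomial constraints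
  have hKN1 : (0:ℝ) ≤ A^4 + s^2 := by positivity
  have h1 : A^4 + s^2 = 1 := by
    have hle : A^4 + s^2 ≤ 1^4 := stmt11_quart_le hKN1 hz.le
    have hge : (1:ℝ)^4 ≤ A^4 + s^2 := stmt11_le_quart hKN1 (by norm_num) hz.ge
    norm_num at hle hge
    linarith
  have hKN2 : (0:ℝ) ≤ B^4 + t^2 := by positivity
  have h2l : (1-δ)^8 ≤ B^4 + t^2 := by
    have := stmt11_le_quart hKN2 (by positivity) hz'.1
    calc (1-δ)^8 = ((1-δ)^2)^4 := by ring
    _ ≤ B^4 + t^2 := this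
  have h2u : B^4 + t^2 ≤ (1+δ)^8 := by
    have := stmt11_quart_le hKN2 hz'.2
    calc B^4 + t^2 ≤ ((1+δ)^2)^4 := this
    _ = (1+δ)^8 := by ring
  have hKdeq : Kd z z' = (C^4 + (t - s - ω/2)^2) ^ ((1:ℝ)/4) := by
    simp only [Kd, KN, Hmul, Hinv, symp, inner_neg_left, Complex.neg_im, neg_add_eq_sub]
    congr 1
    rw [← hCdef, ← hsdef, ← htdef, ← hωdef]
    ring
  have hKd0 : (0:ℝ) ≤ C^4 + (t - s - ω/2)^2 := by positivity
  have h3l : 16*(1-δ)^8 ≤ C^4 + (t - s - ω/2)^2 := by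
    have hd1 := hd.1
    rw [hKdeq] at hd1
    have := stmt11_le_quart hKd0 (by positivity) hd1
    calc 16*(1-δ)^8 = (2*(1-δ)^2)^4 := by ring
    _ ≤ _ := this
  have h4 : C^2 = A^2 + B^2 - 2*p := by
    have hn := norm_sub_sq (𝕜 := ℂ) z'.1 z.1
    rw [inner_re_symm] at hn
    simp only [RCLike.re_to_complex] at hn
    rw [← hCdef, ← hAdef, ← hBdef, ← hpdef] at hn
    linarith [hn.le, hn.ge]
  have h5 : p^2 + ω^2 ≤ A^2 * B^2 := by
    have hcs := norm_inner_le_norm (𝕜 := ℂ) z.1 z'.1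
    have hcs2 : ‖(inner ℂ z.1 z'.1 : ℂ)‖^2 ≤ (A*B)^2 :=
      pow_le_pow_left₀ (norm_nonneg _) hcs 2
    have heq : ‖(inner ℂ z.1 z'.1 : ℂ)‖^2 = p^2 + ω^2 := by
      rw [Complex.sq_norm, Complex.normSq_apply]
      ring
    rw [heq] at hcs2
    linarith [hcs2, sq_nonneg (A*B), (by ring : (A*B)^2 = A^2*B^2).le]
  obtain ⟨ks, kt, kF, kA, kB⟩ :=
    stmt11_key δ A B C s t p ω hδ0 hδ1 (norm_nonneg _) (norm_nonneg _)
      h1 h2l h2u h3l h4 h5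
  clear h1 h2l h2u h3l h4 hKdeq hKd0 hKN1 hKN2 hd
  have hABq : (1:ℝ)/4 ≤ A*B := by
    have := mul_le_mul kA kB (by norm_num) (by linarith)
    linarith [this]
  have hABpos : (0:ℝ) < A*B := by linarith
  have hq14 : (0:ℝ) ≤ δ ^ ((1:ℝ)/4) := Real.rpow_nonneg hδ0.le _
  refine ⟨?_, ?_, ?_⟩
  · -- the angle bound
    rw [abs_of_nonneg (Real.arccos_nonneg _)]
    have hδq : δ ^ ((1:ℝ)/2) ≤ 1/1000 := by
      calc δ ^ ((1:ℝ)/2) ≤ ((1/1000000:ℝ)) ^ ((1:ℝ)/2) :=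
            Real.rpow_le_rpow hδ0.le hδ6 (by norm_num)
      _ = 1/1000 := by
          rw [show (1/1000000:ℝ) = (1/1000)^(2:ℕ) by norm_num,
            ← Real.rpow_natCast (1/1000:ℝ) 2, ← Real.rpow_mul (by norm_num),
            show ((2:ℕ):ℝ) * ((1:ℝ)/2) = 1 by push_cast; ring, Real.rpow_one]
    have hq12 : (0:ℝ) ≤ δ ^ ((1:ℝ)/2) := Real.rpow_nonneg hδ0.le _
    have hθpi : 400 * δ ^ ((1:ℝ)/2) ≤ Real.pi := by
      have := Real.pi_gt_three
      linarith
    have hsqθ : (δ ^ ((1:ℝ)/2))^2 = δ := by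
      rw [← Real.rpow_natCast (δ ^ ((1:ℝ)/2)) 2, ← Real.rpow_mul hδ0.le,
        show (1:ℝ)/2 * ((2:ℕ):ℝ) = 1 by push_cast; ring, Real.rpow_one]
    -- upper bound on cos θ
    have hcosu : Real.cos (400 * δ ^ ((1:ℝ)/2)) ≤ 1 - 32000*δ := by
      have hb := Real.cos_le_one_sub_mul_cos_sq
        (x := 400 * δ ^ ((1:ℝ)/2)) (by rw [abs_of_nonneg (by positivity)]; exact hθpi)
      have hθ2 : (400 * δ ^ ((1:ℝ)/2))^2 = 160000*δ := by rw [mul_pow, hsqθ]; norm_num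
      rw [hθ2] at hb
      have hpilt : Real.pi < 3.15 := Real.pi_lt_d2
      have hpigt : 3 < Real.pi := Real.pi_gt_three
      have hfrac : (1:ℝ)/5 ≤ 2/Real.pi^2 := by
        rw [div_le_div_iff₀ (by norm_num) (by positivity)]
        nlinarith
      have := mul_le_mul_of_nonneg_right hfrac (by positivity : (0:ℝ) ≤ 160000*δ)
      linarith
    have hql : 1 - 400*δ ≤ -p/(A*B) := by
      rw [le_div_iff₀ hABpos]
      nlinarith [kF, hABq, mul_nonneg hδ0.le (by linarith : (0:ℝ) ≤ A*B - 1/4)]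
    have hqu : -p/(A*B) ≤ 1 := by
      rw [div_le_one hABpos]
      nlinarith [h5, sq_nonneg (A*B + p), sq_nonneg ω]
    have hqlm : (-1:ℝ) ≤ -p/(A*B) := by linarith
    by_contra hcon
    push_neg at hcon
    have hlt := Real.cos_lt_cos_of_nonneg_of_le_pi (by positivity)
      (Real.arccos_le_pi (-p/(A*B))) hcon
    rw [Real.cos_arccos hqlm hqu] at hlt
    linarith
  · -- NH z / KN z
    rw [hz, div_one]
    show |s| ^ ((1:ℝ)/2) ≤ 20 * δ ^ ((1:ℝ)/4)
    have := stmt11_quarter_half (c := 4) hδ0.le (by norm_num)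
      (show s^2 ≤ 4^4 * δ by norm_num; linarith)
    linarith [hq14]
  · -- NH z' / KN z'
    have hKp : (1:ℝ)/2 ≤ KN z' := by
      have h12 : (1:ℝ)/2 ≤ (1-δ)^2 := by nlinarith
      linarith [hz'.1]
    rw [div_le_iff₀ (by linarith)]
    show |t| ^ ((1:ℝ)/2) ≤ 20 * δ ^ ((1:ℝ)/4) * KN z'
    have ht4 := stmt11_quarter_half (c := 4) hδ0.le (by norm_num)
      (show t^2 ≤ 4^4 * δ by norm_num; linarith)
    have h20 : 10 * δ ^ ((1:ℝ)/4) ≤ 20 * δ ^ ((1:ℝ)/4) * KN z' := by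
      nlinarith [mul_le_mul_of_nonneg_left hKp (by positivity : (0:ℝ) ≤ 20 * δ ^ ((1:ℝ)/4))]
    linarith
end

section
/- There exists ℓ₀ > 0 such that for all ℓ ≥ ℓ₀, if z₁,…,z_N are vectors in a complex Hilbert space with N ≥ 2^{ℓ/2}/(16 log ℓ) and ‖z_i‖ ≤ ℓ·(log ℓ)^{1/2} for all i, then there exist indices i ≠ j with |ω(z_i, z_j)| ≤ ℓ²/4, where ω(u,v) = Im⟨ū,v⟩. -/
set_option maxHeartbeats 1000000

open Finset

private def cseq (K : ℕ) : ℕ → ℕ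
  | 0 => 2
  | n+1 => K * cseq K n + 1

private lemma two_le_cseq {K : ℕ} (hK : 1 ≤ K) : ∀ n, 2 ≤ cseq K n
  | 0 => le_refl 2
  | (n+1) => by
    have h := two_le_cseq hK n
    have h2 : 1 * 2 ≤ K * cseq K n := Nat.mul_le_mul hK h
    show 2 ≤ K * cseq K n + 1
    omega

lemma proj_inner {E : Type*} [NormedAddCommGroup E] [InnerProductSpace ℂ E]
    (u x y : E) (hu : ‖u‖ ≠ 0) :
    (inner ℂ (x - ((inner ℂ u x : ℂ) / ((‖u‖^2 : ℝ) : ℂ)) • u)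
      (y - ((inner ℂ u y : ℂ) / ((‖u‖^2 : ℝ) : ℂ)) • u) : ℂ)
      = (inner ℂ x y : ℂ) - (starRingEnd ℂ) (inner ℂ u x : ℂ) * (inner ℂ u y : ℂ) / ((‖u‖^2 : ℝ) : ℂ) := by
  have h : (inner ℂ u u : ℂ) = ((‖u‖^2 : ℝ) : ℂ) := by
    rw [inner_self_eq_norm_sq_to_K]; norm_cast
  have hxu : (inner ℂ x u : ℂ) = (starRingEnd ℂ) (inner ℂ u x : ℂ) := by
    rw [← inner_conj_symm]
  have hne : ((‖u‖^2 : ℝ) : ℂ) ≠ 0 := by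
    simpa using pow_ne_zero 2 hu
  rw [inner_sub_left, inner_sub_right, inner_sub_right, inner_smul_left, inner_smul_right,
    inner_smul_right, inner_smul_left, h, hxu, map_div₀, Complex.conj_ofReal]
  have hu2 : (‖u‖ : ℂ) ≠ 0 := by exact_mod_cast hu
  field_simp [hu2]
  ring

lemma key {E : Type*} [NormedAddCommGroup E] [InnerProductSpace ℂ E]
    (ε : ℝ) (hε : 0 < ε) (hε1 : ε ≤ 1) :
    ∀ (n : ℕ) {N : ℕ} (s : Finset (Fin N)) (v : Fin N → E) (δ ρ : ℝ),
      ε/2 + n * (ε^4/128) ≤ δ → ρ ≤ n * (ε^2/4) → ρ ≤ 1 →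
      (∀ i ∈ s, ‖v i‖^2 ≤ ρ) →
      (∀ i ∈ s, ∀ j ∈ s, i ≠ j → δ ≤ |(inner ℂ (v i) (v j) : ℂ).im|) →
      cseq ((2 * ⌈(1024:ℝ)/ε^6⌉₊ + 1)^2) n ≤ s.card → False := by
  intro n
  induction n with
  | zero =>
    intro N s v δ ρ h1 h2 h3 hnorm hpair hcard
    have hs : 1 < s.card := by
      have : cseq ((2 * ⌈(1024:ℝ)/ε^6⌉₊ + 1)^2) 0 = 2 := rfl
      omega
    obtain ⟨i, hi, j, hj, hij⟩ := one_lt_card.mp hs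
    have h2' : ρ ≤ 0 := by simpa using h2
    have hvi : v i = 0 := by
      have h0 : ‖v i‖ ^ 2 ≤ 0 := le_trans (hnorm i hi) h2'
      have : ‖v i‖ = 0 := by nlinarith [norm_nonneg (v i)]
      simpa using this
    have hδ0 := hpair i hi j hj hij
    rw [hvi] at hδ0
    simp at hδ0
    have h1' : ε/2 ≤ δ := by
      have : ((0:ℕ):ℝ) * (ε^4/128) = 0 := by simp
      simpa [this] using h1
    linarith
  | succ n ih =>
    intro N s v δ ρ h1 h2 h3 hnorm hpair hcard
    set M : ℕ := ⌈(1024:ℝ)/ε^6⌉₊ with hMdef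
    set K : ℕ := (2 * M + 1)^2 with hKdef
    have hK1 : 1 ≤ K := Nat.one_le_iff_ne_zero.mpr (by positivity)
    have hδε : ε/2 ≤ δ := by
      have hnn : 0 ≤ (((n:ℕ)+1:ℕ):ℝ) * (ε^4/128) := by positivity
      push_cast at h1 hnn ⊢
      linarith
    have hδpos : 0 < δ := by linarith
    have hs2 : 1 < s.card := lt_of_lt_of_le (by have := two_le_cseq hK1 (n+1); omega) hcard
    obtain ⟨i₁, hi₁, b₀, hb₀, hne₀⟩ := one_lt_card.mp hs2
    have hnorm1 : ∀ i ∈ s, ‖v i‖ ≤ 1 := by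
      intro i hi
      nlinarith [hnorm i hi, norm_nonneg (v i), h3]
    have habs : ∀ i ∈ s, ∀ j ∈ s, ‖(inner ℂ (v i) (v j) : ℂ)‖ ≤ 1 := by
      intro i hi j hj
      have h1' := norm_inner_le_norm (𝕜 := ℂ) (v i) (v j)
      nlinarith [hnorm1 i hi, hnorm1 j hj, norm_nonneg (v i), norm_nonneg (v j)]
    have hv1 : δ ≤ ‖v i₁‖ := by
      have hp := hpair i₁ hi₁ b₀ hb₀ hne₀
      have him := Complex.abs_im_le_norm (inner ℂ (v i₁) (v b₀) : ℂ)
      have habs' : ‖(inner ℂ (v i₁) (v b₀) : ℂ)‖ ≤ ‖v i₁‖ * ‖v b₀‖ := by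
        exact norm_inner_le_norm _ _
      nlinarith [hnorm1 b₀ hb₀, norm_nonneg (v i₁), norm_nonneg (v b₀)]
    have hu : ‖v i₁‖ ≠ 0 := ne_of_gt (lt_of_lt_of_le hδpos hv1)
    set nv : ℝ := ‖v i₁‖^2 with hnvdef
    have hnv_pos : 0 < nv := by
      rw [hnvdef]; positivity
    have hnv_le1 : nv ≤ 1 := le_trans (hnorm i₁ hi₁) h3
    have hnvδ : δ^2 ≤ nv := by rw [hnvdef]; nlinarith
    set η : ℝ := ε^6/1024 with hηdef
    have hηpos : 0 < η := by rw [hηdef]; positivity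
    set g : Fin N → ℂ := fun i => (inner ℂ (v i₁) (v i) : ℂ) with hgdef
    set f : Fin N → ℤ × ℤ := fun i => (⌊(g i).re / η⌋, ⌊(g i).im / η⌋) with hfdef
    set t : Finset (ℤ × ℤ) := Finset.Icc (-(M:ℤ)) M ×ˢ Finset.Icc (-(M:ℤ)) M with htdef
    have hMη : (1:ℝ)/η ≤ M := by
      have hc := Nat.le_ceil ((1024:ℝ)/ε^6)
      rw [hηdef]
      rw [one_div_div]
      calc (1024:ℝ)/ε^6 ≤ (⌈(1024:ℝ)/ε^6⌉₊ : ℝ) := hc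
      _ = (M:ℝ) := by rw [hMdef]
    have hfloor : ∀ x : ℝ, |x| ≤ 1 → ⌊x / η⌋ ∈ Finset.Icc (-(M:ℤ)) (M:ℤ) := by
      intro x hx
      rw [Finset.mem_Icc]
      obtain ⟨hx1, hx2⟩ := abs_le.mp hx
      have hd1 : x/η ≤ 1/η := by gcongr
      have hd2 : (-1:ℝ)/η ≤ x/η := by gcongr
      constructor
      · apply Int.le_floor.mpr
        push_cast
        calc (-(M:ℝ)) ≤ (-1)/η := by rw [neg_div]; linarith
        _ ≤ x/η := hd2
      · have h' : ⌊x/η⌋ ≤ ⌊(M:ℝ)⌋ := Int.floor_le_floor (le_trans hd1 hMη)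
        simpa using h'
    have hmaps : ∀ i ∈ s.erase i₁, f i ∈ t := by
      intro i hi
      have hi' : i ∈ s := mem_of_mem_erase hi
      have habs1 : ‖(g i)‖ ≤ 1 := habs i₁ hi₁ i hi'
      have hre : |(g i).re| ≤ 1 := le_trans (Complex.abs_re_le_norm _) habs1
      have him : |(g i).im| ≤ 1 := le_trans (Complex.abs_im_le_norm _) habs1
      rw [htdef, Finset.mem_product]
      exact ⟨hfloor _ hre, hfloor _ him⟩
    have htne : t.Nonempty := ⟨(0,0), by simp [htdef]⟩
    have htcard : t.card = K := by
      rw [htdef, Finset.card_product, Int.card_Icc, hKdef]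
      have : ((M:ℤ) + 1 - -(M:ℤ)).toNat = 2*M+1 := by omega
      rw [this]; ring
    have hcard' : t.card * cseq K n ≤ (s.erase i₁).card := by
      rw [htcard, card_erase_of_mem hi₁]
      have hc : cseq K (n+1) = K * cseq K n + 1 := rfl
      omega
    obtain ⟨y, hy, hycard⟩ := exists_le_card_fiber_of_mul_le_card_of_maps_to hmaps htne hcard'
    set s' : Finset (Fin N) := (s.erase i₁).filter (fun i => f i = y) with hs'def
    have hs'sub : ∀ i ∈ s', i ∈ s ∧ i ≠ i₁ := by
      intro i hi
      have h' := mem_filter.mp hi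
      have h2' := mem_erase.mp h'.1
      exact ⟨h2'.2, h2'.1⟩
    set w : Fin N → E := fun i => v i - ((g i) / ((nv : ℝ) : ℂ)) • v i₁ with hwdef
    have hwin : ∀ b c, (inner ℂ (w b) (w c) : ℂ)
        = (inner ℂ (v b) (v c) : ℂ) - (starRingEnd ℂ) (g b) * (g c) / ((nv:ℝ):ℂ) :=
      fun b c => proj_inner (v i₁) (v b) (v c) hu
    have hgδ : ∀ i ∈ s, i ≠ i₁ → δ ≤ ‖(g i)‖ := by
      intro i hi hnei
      have hp := hpair i₁ hi₁ i hi (Ne.symm hnei)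
      exact le_trans hp (Complex.abs_im_le_norm _)
    -- norms of new vectors
    have hwnorm : ∀ i ∈ s', ‖w i‖^2 ≤ ρ - ε^2/4 := by
      intro i hi
      obtain ⟨his, hnei⟩ := hs'sub i hi
      have he : ‖w i‖^2 = ((inner ℂ (w i) (w i) : ℂ)).re := by
        have h' := inner_self_eq_norm_sq (𝕜 := ℂ) (w i)
        simpa using h'.symm
      have hconj : (starRingEnd ℂ) (g i) * (g i) / ((nv:ℝ):ℂ)
          = (((‖(g i)‖)^2 / nv : ℝ) : ℂ) := by
        rw [mul_comm, Complex.mul_conj, ← Complex.sq_norm, ← Complex.ofReal_div]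
      rw [he, hwin i i, hconj, Complex.sub_re, Complex.ofReal_re]
      have hre : ((inner ℂ (v i) (v i) : ℂ)).re = ‖v i‖^2 := by
        simpa using inner_self_eq_norm_sq (𝕜 := ℂ) (v i)
      rw [hre]
      have hgi := hgδ i his hnei
      have habs0 : (0:ℝ) ≤ ‖(g i)‖ := norm_nonneg _
      have hstep : ε^2/4 ≤ (‖(g i)‖)^2 / nv := by
        rw [le_div_iff₀ hnv_pos]
        nlinarith [hgi, hδε, hnv_le1, hnv_pos.le, hε.le, habs0]
      linarith [hnorm i his]
    -- same cell estimate
    have hsame : ∀ b ∈ s', ∀ c ∈ s', ‖(g c - g b)‖ ≤ 2*η := by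
      intro b hb c hc
      have hfb := (mem_filter.mp hb).2
      have hfc := (mem_filter.mp hc).2
      have hfbc : f b = f c := hfb.trans hfc.symm
      have hre : ⌊(g b).re/η⌋ = ⌊(g c).re/η⌋ := by
        have h' := congrArg Prod.fst hfbc
        simpa [hfdef] using h'
      have him : ⌊(g b).im/η⌋ = ⌊(g c).im/η⌋ := by
        have h' := congrArg Prod.snd hfbc
        simpa [hfdef] using h'
      have h1 : |(g c).re - (g b).re| < η := by
        have h' := Int.abs_sub_lt_one_of_floor_eq_floor hre.symm
        rw [div_sub_div_same, abs_div, abs_of_pos hηpos, div_lt_one hηpos] at h'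
        exact h'
      have h2 : |(g c).im - (g b).im| < η := by
        have h' := Int.abs_sub_lt_one_of_floor_eq_floor him.symm
        rw [div_sub_div_same, abs_div, abs_of_pos hηpos, div_lt_one hηpos] at h'
        exact h'
      calc ‖(g c - g b)‖ ≤ |(g c - g b).re| + |(g c - g b).im| :=
            Complex.norm_le_abs_re_add_abs_im _
      _ ≤ η + η := by rw [Complex.sub_re, Complex.sub_im]; linarith
      _ = 2*η := by ring
    have hdiv_im : ∀ z : ℂ, (z / ((nv:ℝ):ℂ)).im = z.im / nv := by
      intro z
      rw [div_eq_mul_inv, ← Complex.ofReal_inv]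
      simp [Complex.mul_im]
      ring
    have hwpair : ∀ b ∈ s', ∀ c ∈ s', b ≠ c → δ - ε^4/128 ≤ |(inner ℂ (w b) (w c) : ℂ).im| := by
      intro b hb c hc hbc
      obtain ⟨hbs, hbne⟩ := hs'sub b hb
      obtain ⟨hcs, hcne⟩ := hs'sub c hc
      have hkey : ((starRingEnd ℂ) (g b) * (g c)).im
          = ((starRingEnd ℂ) (g b) * (g c - g b)).im := by
        have hsplit : (starRingEnd ℂ) (g b) * (g c)
            = (starRingEnd ℂ) (g b) * (g c - g b) + g b * (starRingEnd ℂ) (g b) := by ring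
        rw [hsplit, Complex.add_im, Complex.mul_conj]
        simp
      have herr : |((starRingEnd ℂ) (g b) * (g c) / ((nv:ℝ):ℂ)).im| ≤ ε^4/128 := by
        rw [hdiv_im, hkey]
        have hb2 : |((starRingEnd ℂ) (g b) * (g c - g b)).im| ≤ 2*η := by
          refine le_trans (Complex.abs_im_le_norm _) ?_
          rw [norm_mul, Complex.norm_conj]
          have hb1 : ‖(g b)‖ ≤ 1 := habs i₁ hi₁ b hbs
          have hsm := hsame b hb c hc
          nlinarith [norm_nonneg (g b),
            norm_nonneg (g c - g b)]
        rw [abs_div, abs_of_pos hnv_pos]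
        have hnvε : ε^2/4 ≤ nv := by nlinarith [hδε, hε]
        calc |((starRingEnd ℂ) (g b) * (g c - g b)).im| / nv ≤ (2*η)/nv := by gcongr
        _ ≤ (2*η)/(ε^2/4) := by
            apply div_le_div_of_nonneg_left (by positivity) (by positivity) hnvε
        _ = ε^4/128 := by rw [hηdef]; field_simp; ring
      have hmain := hpair b hbs c hcs hbc
      rw [hwin b c, Complex.sub_im]
      have habs2 := abs_sub_abs_le_abs_sub ((inner ℂ (v b) (v c) : ℂ)).im
        (((starRingEnd ℂ) (g b) * (g c) / ((nv:ℝ):ℂ)).im)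
      linarith
    exact ih s' w (δ - ε^4/128) (ρ - ε^2/4)
      (by push_cast at h1 ⊢; linarith)
      (by push_cast at h2 ⊢; linarith)
      (by nlinarith [sq_nonneg ε])
      hwnorm hwpair hycard


-- exp x ≥ e * x
lemma exp_ge_e_mul (x : ℝ) (hx : 0 ≤ x) : Real.exp 1 * x ≤ Real.exp x := by
  have h1 : (x - 1) + 1 ≤ Real.exp (x - 1) := Real.add_one_le_exp _
  have h2 : Real.exp x = Real.exp 1 * Real.exp (x - 1) := by
    rw [← Real.exp_add]; ring_nf
  rw [h2]
  have := Real.exp_pos 1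
  nlinarith [Real.exp_pos (x-1)]

-- 2^y = exp (log 2 * y)
lemma two_rpow_eq (y : ℝ) : (2:ℝ) ^ y = Real.exp (Real.log 2 * y) :=
  Real.rpow_def_of_pos (by norm_num) y

lemma L_le_two_rpow (L : ℝ) (hL : 0 ≤ L) : L ≤ (2:ℝ) ^ L := by
  rw [two_rpow_eq]
  have hlog0 : 0 ≤ Real.log 2 := Real.log_nonneg (by norm_num)
  have h := exp_ge_e_mul (Real.log 2 * L) (by positivity)
  have hlog : (0.6931471803 : ℝ) < Real.log 2 := Real.log_two_gt_d9
  have he : (2.7182818283 : ℝ) < Real.exp 1 := Real.exp_one_gt_d9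
  have h12 : (1:ℝ) ≤ Real.exp 1 * Real.log 2 := by nlinarith
  nlinarith [mul_le_mul_of_nonneg_right h12 hL]

lemma numeric (l L ε : ℝ) (hl : (2:ℝ)^(60:ℕ) ≤ l)
    (hLd : L = Real.logb 2 l) (hεd : ε = 1/(4*L)) :
    (((3*((2*⌈(1024:ℝ)/ε^6⌉₊+1)^2))^(⌈(4:ℝ)/ε^2⌉₊+1) : ℕ) : ℝ) ≤ 2^(l/2)/(16*L) := by
  have hl1 : (1:ℝ) ≤ l := le_trans (by norm_num) hl
  have hlpos : 0 < l := by linarith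
  have hlog2pos : (0:ℝ) < Real.log 2 := Real.log_pos (by norm_num)
  have hL60 : 60 ≤ L := by
    rw [hLd, Real.logb, le_div_iff₀ hlog2pos]
    have h1 : Real.log ((2:ℝ)^(60:ℕ)) ≤ Real.log l := Real.log_le_log (by positivity) hl
    rw [Real.log_pow] at h1
    push_cast at h1
    linarith
  have hLpos : 0 < L := by linarith
  have hL1 : (1:ℝ) ≤ L := by linarith
  have hεpos : 0 < ε := by rw [hεd]; positivity
  have hεne : ε ≠ 0 := ne_of_gt hεpos
  have hLne : L ≠ 0 := ne_of_gt hLpos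
  -- ceil bounds
  have hε6 : (1024:ℝ)/ε^6 = 1024*(4*L)^6 := by
    rw [hεd]; field_simp
  have hε2 : (4:ℝ)/ε^2 = 64*L^2 := by
    rw [hεd]; field_simp; ring
  set M : ℕ := ⌈(1024:ℝ)/ε^6⌉₊ with hMdef
  set n₀ : ℕ := ⌈(4:ℝ)/ε^2⌉₊ with hn₀def
  have hL6 : (1:ℝ) ≤ L^6 := by
    calc (1:ℝ) = 1^6 := by norm_num
    _ ≤ L^6 := pow_le_pow_left₀ (by norm_num) hL1 6
  have hL2 : (1:ℝ) ≤ L^2 := by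
    calc (1:ℝ) = 1^2 := by norm_num
    _ ≤ L^2 := pow_le_pow_left₀ (by norm_num) hL1 2
  have hM : (M:ℝ) ≤ 1024*(4*L)^6 + 1 := by
    rw [hMdef, ← hε6]
    exact (Nat.ceil_lt_add_one (show (0:ℝ) ≤ 1024/ε^6 by positivity)).le
  have h2M : ((2*M+1:ℕ):ℝ) ≤ 2^24 * L^6 := by
    push_cast
    nlinarith [hM, hL6]
  have h3K : ((3*((2*M+1)^2) : ℕ) : ℝ) ≤ (2:ℝ)^(64*L) := by
    have hLr : L ≤ (2:ℝ)^L := L_le_two_rpow L hLpos.le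
    have hL12 : L^12 ≤ (2:ℝ)^(12*L) := by
      have h1 : L^12 ≤ ((2:ℝ)^L)^(12:ℕ) := pow_le_pow_left₀ hLpos.le hLr 12
      have h2 : ((2:ℝ)^L)^(12:ℕ) = (2:ℝ)^(12*L) := by
        rw [← Real.rpow_natCast ((2:ℝ)^L) 12, ← Real.rpow_mul (by norm_num : (0:ℝ) ≤ 2)]
        norm_num
        ring_nf
      linarith [h2.le, h2.ge]
    have hKb : ((3*((2*M+1)^2) : ℕ) : ℝ) ≤ 3 * (2^24 * L^6)^2 := by
      push_cast
      have h0 : (0:ℝ) ≤ ((2*M+1:ℕ):ℝ) := by positivity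
      push_cast at h2M h0
      nlinarith [h2M, h0]
    have hc : (3:ℝ) * (2^24 * L^6)^2 ≤ 2^50 * (2:ℝ)^(12*L) := by
      have : (3:ℝ) * (2^24*L^6)^2 = 3 * 2^48 * L^12 := by ring
      rw [this]
      nlinarith [hL12, pow_nonneg hLpos.le 12]
    have hd : (2:ℝ)^(50:ℕ) * (2:ℝ)^(12*L) ≤ (2:ℝ)^(64*L) := by
      rw [← Real.rpow_natCast 2 50, ← Real.rpow_add (by norm_num : (0:ℝ) < 2)]
      apply Real.rpow_le_rpow_of_exponent_le (by norm_num)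
      push_cast
      linarith
    calc ((3*((2*M+1)^2) : ℕ) : ℝ) ≤ 3 * (2^24 * L^6)^2 := hKb
    _ ≤ 2^50 * (2:ℝ)^(12*L) := hc
    _ ≤ (2:ℝ)^(64*L) := hd
  have hn₀ : ((n₀:ℕ):ℝ) + 1 ≤ 66*L^2 := by
    have h' := Nat.ceil_lt_add_one (show (0:ℝ) ≤ 4/ε^2 by positivity)
    rw [hn₀def]
    nlinarith [hL2, hε2, h']
  -- master inequality
  have hQ0 : (0:ℝ) ≤ l^((1:ℝ)/9) := Real.rpow_nonneg hlpos.le _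
  have hlog9 : Real.log l ≤ 9 * l^((1:ℝ)/9) := by
    have := Real.log_le_rpow_div hlpos.le (show (0:ℝ) < 1/9 by norm_num)
    calc Real.log l ≤ l^((1:ℝ)/9) / (1/9) := this
    _ = 9 * l^((1:ℝ)/9) := by ring
  have hLQ : L ≤ 14 * l^((1:ℝ)/9) := by
    have hLl : L * Real.log 2 = Real.log l := by
      rw [hLd, Real.logb]; field_simp
    have hlog : (0.6931471803 : ℝ) < Real.log 2 := Real.log_two_gt_d9
    nlinarith [hQ0]
  have hQQ : (l^((1:ℝ)/9))^(3:ℕ) = l^((1:ℝ)/3) := by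
    rw [← Real.rpow_natCast (l^((1:ℝ)/9)) 3, ← Real.rpow_mul hlpos.le]
    norm_num
  have hsplit : l^((1:ℝ)/3) * l^((2:ℝ)/3) = l := by
    rw [← Real.rpow_add hlpos]
    norm_num
  have h23 : (2:ℝ)^(40:ℕ) ≤ l^((2:ℝ)/3) := by
    have h1 : ((2:ℝ)^(60:ℕ))^((2:ℝ)/3) ≤ l^((2:ℝ)/3) :=
      Real.rpow_le_rpow (by positivity) hl (by norm_num)
    have h2 : ((2:ℝ)^(60:ℕ))^((2:ℝ)/3) = (2:ℝ)^(40:ℕ) := by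
      rw [← Real.rpow_natCast 2 60, ← Real.rpow_mul (by norm_num : (0:ℝ) ≤ 2)]
      norm_num
    linarith [h2 ▸ h1]
  have hcube : L^3 ≤ 2744 * l^((1:ℝ)/3) := by
    have h1 : L^3 ≤ (14 * l^((1:ℝ)/9))^3 := pow_le_pow_left₀ hLpos.le hLQ 3
    have h2 : (14 * l^((1:ℝ)/9))^3 = 2744 * (l^((1:ℝ)/9))^(3:ℕ) := by ring
    rw [h2, hQQ] at h1
    exact h1
  have master : 16896 * L^3 ≤ l := by
    have hq13 : (0:ℝ) ≤ l^((1:ℝ)/3) := Real.rpow_nonneg hlpos.le _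
    have h40 : (46362624:ℝ) ≤ l^((2:ℝ)/3) := le_trans (by norm_num) h23
    calc 16896 * L^3 ≤ 16896 * (2744 * l^((1:ℝ)/3)) := by nlinarith [hcube]
    _ = 46362624 * l^((1:ℝ)/3) := by ring
    _ ≤ l^((2:ℝ)/3) * l^((1:ℝ)/3) := mul_le_mul_of_nonneg_right h40 hq13
    _ = l := by rw [mul_comm]; exact hsplit
  -- final
  have h16L : 16*L ≤ (2:ℝ)^(l/4) := by
    rw [two_rpow_eq]
    have hexp := exp_ge_e_mul (Real.log 2 * (l/4)) (by positivity)
    have hlog : (0.6931471803 : ℝ) < Real.log 2 := Real.log_two_gt_d9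
    have he : (2.7182818283 : ℝ) < Real.exp 1 := Real.exp_one_gt_d9
    have hLsm : 3600 * L ≤ L^3 := by nlinarith [hL60]
    have h12 : (1:ℝ) ≤ Real.exp 1 * Real.log 2 := by nlinarith
    have h13 : (1:ℝ) * (l/4) ≤ (Real.exp 1 * Real.log 2) * (l/4) :=
      mul_le_mul_of_nonneg_right h12 (by positivity)
    have hexpl : l/4 ≤ Real.exp (Real.log 2 * (l/4)) := by nlinarith [hexp]
    linarith [hexpl, hLsm, master]
  have hpowle : (((3*((2*M+1)^2))^(n₀+1) : ℕ) : ℝ) ≤ (2:ℝ)^(l/4) := by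
    push_cast
    have h0 : (0:ℝ) ≤ ((3*((2*M+1)^2) : ℕ):ℝ) := by positivity
    have h1 : (((3*((2*M+1)^2) : ℕ)):ℝ)^(n₀+1) ≤ ((2:ℝ)^(64*L))^(n₀+1) := by
      apply pow_le_pow_left₀ h0 h3K
    have h2 : ((2:ℝ)^(64*L))^((n₀+1:ℕ)) = (2:ℝ)^(64*L*((n₀:ℝ)+1)) := by
      rw [← Real.rpow_natCast ((2:ℝ)^(64*L)) (n₀+1), ← Real.rpow_mul (by norm_num : (0:ℝ) ≤ 2)]
      push_cast
      ring_nf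
    have h3 : 64*L*((n₀:ℝ)+1) ≤ l/4 := by
      have : 64*L*((n₀:ℝ)+1) ≤ 64*L*(66*L^2) := by nlinarith [hn₀, hLpos]
      nlinarith [master]
    have h4 : (2:ℝ)^(64*L*((n₀:ℝ)+1)) ≤ (2:ℝ)^(l/4) :=
      Real.rpow_le_rpow_of_exponent_le (by norm_num) h3
    push_cast at h1 h2
    linarith
  have hfin : (2:ℝ)^(l/4) ≤ 2^(l/2)/(16*L) := by
    rw [le_div_iff₀ (by positivity : (0:ℝ) < 16*L)]
    have : (2:ℝ)^(l/2) = (2:ℝ)^(l/4) * (2:ℝ)^(l/4) := by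
      rw [← Real.rpow_add (by norm_num : (0:ℝ) < 2)]; ring_nf
    rw [this]
    have h0 : (0:ℝ) ≤ (2:ℝ)^(l/4) := Real.rpow_nonneg (by norm_num) _
    nlinarith [h16L]
  exact le_trans hpowle hfin

lemma ofReal_mul_im' (r : ℝ) (z : ℂ) : ((r:ℂ) * z).im = r * z.im := by
  simp [Complex.mul_im]

private lemma cseq_le_pow {K : ℕ} (hK : 1 ≤ K) : ∀ n, cseq K n ≤ (3*K)^(n+1)
  | 0 => by
    show 2 ≤ (3*K)^1
    rw [pow_one]
    omega
  | (n+1) => by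
    have h := cseq_le_pow hK n
    show K * cseq K n + 1 ≤ (3*K)^(n+2)
    have h1 : K * cseq K n ≤ K * (3*K)^(n+1) := Nat.mul_le_mul_left K h
    have h3 : 1 ≤ (3*K)^(n+1) := Nat.one_le_pow _ _ (by omega)
    have h4 : (3*K)^(n+2) = K * (3*K)^(n+1) + 2*K*(3*K)^(n+1) := by ring
    have h5 : 1 ≤ 2*K*(3*K)^(n+1) := by
      have := Nat.mul_le_mul (show 1 ≤ 2*K by omega) h3
      omega
    omega

variable {H : Type*} [NormedAddCommGroup H] [InnerProductSpace ℂ H]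

/-- many bounded vectors contain a pair with small symplectic value. -/
theorem stmt_12 :
    ∃ l₀ : ℝ, 0 < l₀ ∧ ∀ (H : Type*) [inst : NormedAddCommGroup H]
      [inst2 : InnerProductSpace ℂ H] (l : ℝ), l₀ ≤ l →
      ∀ (N : ℕ) (z : Fin N → H),
        (2 : ℝ) ^ (l / 2) / (16 * Real.logb 2 l) ≤ (N : ℝ) →
        (∀ i, ‖z i‖ ≤ l * (Real.logb 2 l) ^ ((1:ℝ)/2)) →
        ∃ i j, i ≠ j ∧ |symp (z i) (z j)| ≤ l ^ 2 / 4 := by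
  refine ⟨(2:ℝ)^(60:ℕ), by positivity, ?_⟩
  intro H _ _ l hl N z hN hz
  by_contra hcon
  push_neg at hcon
  set L := Real.logb 2 l with hLd
  have hl1 : (1:ℝ) ≤ l := le_trans (by norm_num) hl
  have hlpos : 0 < l := by linarith
  have hlog2pos : (0:ℝ) < Real.log 2 := Real.log_pos (by norm_num)
  have hL60 : 60 ≤ L := by
    rw [hLd, Real.logb, le_div_iff₀ hlog2pos]
    have h1 : Real.log ((2:ℝ)^(60:ℕ)) ≤ Real.log l := Real.log_le_log (by positivity) hl
    rw [Real.log_pow] at h1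
    push_cast at h1
    linarith
  have hLpos : 0 < L := by linarith
  set ε : ℝ := 1/(4*L) with hεd
  have hεpos : 0 < ε := by rw [hεd]; positivity
  have hε1 : ε ≤ 1 := by
    rw [hεd, div_le_one (by linarith)]
    linarith
  set R : ℝ := l * L^((1:ℝ)/2) with hRd
  have hLhalfpos : 0 < L^((1:ℝ)/2) := Real.rpow_pos_of_pos hLpos _
  have hRpos : 0 < R := by rw [hRd]; exact mul_pos hlpos hLhalfpos
  have hLsq : (L^((1:ℝ)/2))^(2:ℕ) = L := by
    rw [← Real.rpow_natCast (L^((1:ℝ)/2)) 2, ← Real.rpow_mul hLpos.le]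
    norm_num
  have hR2 : R^2 = l^2 * L := by
    rw [hRd, mul_pow, hLsq]
  set v : Fin N → H := fun i => ((R⁻¹ : ℝ) : ℂ) • z i with hvd
  have hvnorm : ∀ i, ‖v i‖^2 ≤ 1 := by
    intro i
    have h1 : ‖v i‖ = R⁻¹ * ‖z i‖ := by
      rw [hvd]
      rw [norm_smul, Complex.norm_real, Real.norm_eq_abs, abs_of_pos (by positivity)]
    have h2 : ‖z i‖ ≤ R := hz i
    have h3 : ‖v i‖ ≤ 1 := by
      rw [h1]
      calc R⁻¹ * ‖z i‖ ≤ R⁻¹ * R := by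
            apply mul_le_mul_of_nonneg_left h2 (by positivity)
      _ = 1 := inv_mul_cancel₀ (ne_of_gt hRpos)
    nlinarith [norm_nonneg (v i)]
  have hvpair : ∀ i j : Fin N, i ≠ j → ε ≤ |(inner ℂ (v i) (v j) : ℂ).im| := by
    intro i j hij
    have h := hcon i j hij
    rw [symp] at h
    have hinner : (inner ℂ (v i) (v j) : ℂ) = ((R⁻¹^2 : ℝ) : ℂ) * (inner ℂ (z i) (z j) : ℂ) := by
      rw [hvd]
      simp only [inner_smul_left, inner_smul_right, Complex.conj_ofReal]
      push_cast
      ring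
    have him : (inner ℂ (v i) (v j) : ℂ).im = R⁻¹^2 * (inner ℂ (z i) (z j) : ℂ).im := by
      rw [hinner, ofReal_mul_im']
    rw [him, abs_mul, abs_of_pos (pow_pos (inv_pos.mpr hRpos) 2)]
    have hεeq : ε = R⁻¹^2 * (l^2/4) := by
      rw [hεd, inv_pow, hR2]
      field_simp
    rw [hεeq]
    apply mul_le_mul_of_nonneg_left (le_of_lt h) (by positivity)
  -- apply the key lemma
  set n₀ : ℕ := ⌈(4:ℝ)/ε^2⌉₊ with hn₀d
  set K : ℕ := (2 * ⌈(1024:ℝ)/ε^6⌉₊ + 1)^2 with hKd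
  have hK1 : 1 ≤ K := by rw [hKd]; exact Nat.one_le_pow _ _ (by omega)
  have hceil1 : ((n₀:ℕ):ℝ) < 4/ε^2 + 1 := by
    rw [hn₀d]; exact Nat.ceil_lt_add_one (by positivity)
  have hceil2 : (4:ℝ)/ε^2 ≤ (n₀:ℝ) := by rw [hn₀d]; exact Nat.le_ceil _
  have h1 : ε/2 + (n₀:ℝ) * (ε^4/128) ≤ ε := by
    have hx : (n₀:ℝ) * ε^4 ≤ (4/ε^2 + 1) * ε^4 := by nlinarith [pow_pos hεpos 4]
    have hy : (4/ε^2 + 1) * ε^4 = 4*ε^2 + ε^4 := by field_simp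
    have ha : ε^2 ≤ ε := by nlinarith
    have hb : ε^4 ≤ ε^2 := by nlinarith [sq_nonneg ε, sq_nonneg (ε^2), pow_pos hεpos 2]
    have hzz : (n₀:ℝ)*(ε^4/128) = ((n₀:ℝ)*ε^4)/128 := by ring
    linarith
  have h2 : (1:ℝ) ≤ (n₀:ℝ) * (ε^2/4) := by
    have := mul_le_mul_of_nonneg_right hceil2 (le_of_lt (by positivity : (0:ℝ) < ε^2/4))
    calc (1:ℝ) = (4/ε^2) * (ε^2/4) := by field_simp
    _ ≤ (n₀:ℝ) * (ε^2/4) := this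
  have hcard : cseq K n₀ ≤ (Finset.univ : Finset (Fin N)).card := by
    rw [Finset.card_univ, Fintype.card_fin]
    have hr1 : ((cseq K n₀ : ℕ):ℝ) ≤ (((3*K)^(n₀+1) : ℕ):ℝ) :=
      Nat.cast_le.mpr (cseq_le_pow hK1 n₀)
    have hr2 : (((3*K)^(n₀+1) : ℕ):ℝ) ≤ 2^(l/2)/(16*L) := by
      rw [hKd, hn₀d]
      exact numeric l L ε hl hLd hεd
    have hr3 : ((cseq K n₀ : ℕ):ℝ) ≤ (N:ℝ) := le_trans hr1 (le_trans hr2 hN)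
    exact_mod_cast hr3
  exact key ε hεpos hε1 n₀ Finset.univ v ε 1 h1 h2 le_rfl
    (fun i _ => hvnorm i) (fun i _ j _ hij => hvpair i j hij) hcard
end

section
/- Let z₀, z₁, z₂, z₂' be a δ-fork in the Heisenberg group ℍ_∞ (i.e. both triples {z₀,z₁,z₂} and {z₀,z₁,z₂'} are (1+δ)-biLipschitz equivalent to the path {0,1,2} ⊂ ℤ), with δ ∈ (0, 10⁻¹⁰⁰). If NH(z₂⁻¹ z₂') < (1/2)·d(z₂, z₂'), then d(z₂, z₂') ≤ 2000·δ^{1/2}·d(z₀, z₁). -/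
set_option linter.unusedSectionVars false

variable {H : Type*} [NormedAddCommGroup H] [InnerProductSpace ℂ H]

/-- `(a, b, c)` is `(1+δ)`-biLipschitz equivalent to the path `{0,1,2} ⊂ ℤ`. -/
noncomputable def BiLipP3 (δ : ℝ) (a b c : H × ℝ) : Prop :=
  ∃ s : ℝ, 0 < s ∧
    s ≤ Kd a b ∧ Kd a b ≤ (1 + δ) * s ∧
    s ≤ Kd b c ∧ Kd b c ≤ (1 + δ) * s ∧
    2 * s ≤ Kd a c ∧ Kd a c ≤ (1 + δ) * (2 * s)

lemma symp_self (x : H) : symp x x = 0 := by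
  have h : (inner ℂ x x : ℂ) = (‖x‖:ℂ)^2 := inner_self_eq_norm_sq_to_K x
  simp [symp, h, pow_two, Complex.mul_im]

lemma symp_add_left (x y z : H) : symp (x+y) z = symp x z + symp y z := by
  simp [symp, inner_add_left]
lemma symp_add_right (x y z : H) : symp x (y+z) = symp x y + symp x z := by
  simp [symp, inner_add_right]
lemma symp_neg_left (x z : H) : symp (-x) z = - symp x z := by
  simp [symp, inner_neg_left]
lemma symp_neg_right (x z : H) : symp x (-z) = - symp x z := by
  simp [symp, inner_neg_right]

lemma hmul_cocycle (z₀ z₁ z₂ : H × ℝ) :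
    Hmul (Hinv z₀) z₂ = Hmul (Hmul (Hinv z₀) z₁) (Hmul (Hinv z₁) z₂) := by
  unfold Hmul Hinv
  apply Prod.ext
  · simp
  · simp only []
    have key : symp (-z₀.1 + z₁.1) (-z₁.1 + z₂.1)
        = symp z₀.1 z₁.1 - symp z₀.1 z₂.1 + symp z₁.1 z₂.1 := by
      rw [symp_add_left, symp_add_right, symp_add_right, symp_neg_left, symp_neg_left,
        symp_neg_right, symp_neg_right, symp_self]
      ring
    simp only [key, symp_neg_left]
    ring

lemma rpow_quarter_pow (B : ℝ) (hB : 0 ≤ B) : (B ^ ((1:ℝ)/4)) ^ (4:ℕ) = B := by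
  rw [← Real.rpow_natCast (B ^ ((1:ℝ)/4)) 4, ← Real.rpow_mul hB]
  norm_num

lemma rpow_half_pow (B : ℝ) (hB : 0 ≤ B) : (B ^ ((1:ℝ)/2)) ^ (2:ℕ) = B := by
  rw [← Real.rpow_natCast (B ^ ((1:ℝ)/2)) 2, ← Real.rpow_mul hB]
  norm_num

lemma KN_pow4 (a : H × ℝ) : (KN a) ^ (4:ℕ) = ‖a.1‖ ^ 4 + a.2 ^ 2 :=
  rpow_quarter_pow _ (by positivity)

lemma KN_nonneg (a : H × ℝ) : 0 ≤ KN a := Real.rpow_nonneg (by positivity) _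

lemma Kd_nonneg (g h : H × ℝ) : 0 ≤ Kd g h := KN_nonneg _

set_option maxHeartbeats 1000000 in
lemma core (ξ η τ σ r w δ s : ℝ) (hδ0 : 0 < δ) (hδ1 : δ < 1) (hs : 0 < s)
    (hξ : 0 ≤ ξ) (hη : 0 ≤ η)
    (h1 : ξ^4 + τ^2 ≤ (1+δ)^4 * s^4)
    (h3 : η^4 + σ^2 ≤ (1+δ)^4 * s^4)
    (h5 : 16 * s^4 ≤ (ξ^2+η^2+2*r)^2 + (τ+σ+w/2)^2)
    (h6 : r^2 + w^2 ≤ ξ^2 * η^2)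
    (hS : 0 ≤ ξ^2+η^2+2*r) (hD : 0 ≤ ξ^2+η^2-2*r) :
    ξ^2+η^2-2*r ≤ 80 * δ * s^2 := by
  set X2 : ℝ := (1+δ)^2 * s^2 with hX2
  have hX2pos : 0 < X2 := by positivity
  have hX2sq : X2^2 = (1+δ)^4 * s^4 := by rw [hX2]; ring
  have ha : ξ^2 ≤ X2 := by nlinarith [sq_nonneg τ, sq_nonneg (ξ^2 + X2)]
  have hb : η^2 ≤ X2 := by nlinarith [sq_nonneg σ, sq_nonneg (η^2 + X2)]
  have hτ : τ^2 ≤ 2*X2*(X2 - ξ^2) := by nlinarith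
  have hσ : σ^2 ≤ 2*X2*(X2 - η^2) := by nlinarith
  have hr1 : r ≤ ξ*η := by nlinarith [sq_nonneg w, sq_nonneg (r - ξ*η), mul_nonneg hξ hη]
  have hr2 : -(ξ*η) ≤ r := by nlinarith [sq_nonneg w, sq_nonneg (r + ξ*η), mul_nonneg hξ hη]
  have p2 : ξ*η - r ≤ (ξ^2+η^2-2*r)/2 := by nlinarith [sq_nonneg (ξ-η)]
  have p3 : ξ*η + r ≤ 2*X2 := by nlinarith [sq_nonneg (ξ-η)]
  have hw : w^2 ≤ X2 * (ξ^2+η^2-2*r) := by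
    have hmm : (ξ*η - r) * (ξ*η + r) ≤ ((ξ^2+η^2-2*r)/2) * (2*X2) := by
      apply mul_le_mul p2 p3 (by linarith) (by linarith [hD])
    nlinarith [hmm]
  have hT : (τ+σ+w/2)^2 ≤ 6*X2*((X2-ξ^2)+(X2-η^2)) + (3/4)*(X2*(ξ^2+η^2-2*r)) := by
    nlinarith [sq_nonneg (τ-σ), sq_nonneg (τ - w/2), sq_nonneg (σ - w/2)]
  have hs4 : 16*X2^2 - 64*δ*X2^2 ≤ 16*s^4 := by
    have h' : (1-4*δ)*(1+δ)^4 ≤ 1 := by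
      nlinarith [mul_pos hδ0 hδ0, mul_pos (mul_pos hδ0 hδ0) hδ0,
        mul_pos (mul_pos (mul_pos hδ0 hδ0) hδ0) hδ0,
        mul_pos (mul_pos (mul_pos (mul_pos hδ0 hδ0) hδ0) hδ0) hδ0]
    nlinarith [pow_pos hs 4, sq_nonneg s, mul_pos hs hs]
  have key : 2*X2*((X2-ξ^2)+(X2-η^2)) + (13/4)*X2*(ξ^2+η^2-2*r) ≤ 64*δ*X2^2 := by
    have hE : 0 ≤ (X2-ξ^2)+(X2-η^2) := by linarith
    have hu0 : 0 ≤ 2*((X2-ξ^2)+(X2-η^2)) + (ξ^2+η^2-2*r) := by linarith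
    have hu : 2*((X2-ξ^2)+(X2-η^2)) + (ξ^2+η^2-2*r) ≤ 4*X2 := by linarith
    have hprod : 0 ≤ (2*((X2-ξ^2)+(X2-η^2)) + (ξ^2+η^2-2*r)) *
        (4*X2 - (2*((X2-ξ^2)+(X2-η^2)) + (ξ^2+η^2-2*r))) :=
      mul_nonneg hu0 (by linarith)
    nlinarith [h5, hT, hs4, hprod]
  have hE : 0 ≤ (X2-ξ^2)+(X2-η^2) := by linarith
  have hX4 : X2 ≤ 4*s^2 := by
    nlinarith [mul_nonneg (mul_nonneg (by linarith : (0:ℝ) ≤ 1-δ) (by linarith : (0:ℝ) ≤ 3+δ)) (sq_nonneg s)]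
  have h9 : (13/4)*(ξ^2+η^2-2*r) ≤ 64*δ*X2 := by
    have h8 : X2 * ((13/4)*(ξ^2+η^2-2*r)) ≤ X2 * (64*δ*X2) := by
      linarith only [key, mul_nonneg hX2pos.le hE]
    exact le_of_mul_le_mul_left h8 hX2pos
  have h10 : δ*X2 ≤ δ*(4*s^2) := mul_le_mul_of_nonneg_left hX4 hδ0.le
  linarith

set_option maxHeartbeats 1000000 in
/-- main fork lemma: the horizontal increments nearly agree. -/
lemma forkB (δ : ℝ) (hδ0 : 0 < δ) (hδ1 : δ < 1) (z₀ z₁ z₂ : H × ℝ)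
    (h : BiLipP3 δ z₀ z₁ z₂) :
    ‖(z₂.1 - z₁.1) - (z₁.1 - z₀.1)‖^2 ≤ 80 * δ * (Kd z₀ z₁)^2 := by
  obtain ⟨s, hs, h01l, h01u, h12l, h12u, h02l, h02u⟩ := h
  set P : H × ℝ := Hmul (Hinv z₀) z₁ with hP
  set Q : H × ℝ := Hmul (Hinv z₁) z₂ with hQ
  have hxP : P.1 = z₁.1 - z₀.1 := by simp [hP, Hmul, Hinv]; abel
  have hxQ : Q.1 = z₂.1 - z₁.1 := by simp [hQ, Hmul, Hinv]; abel
  have hKP : Kd z₀ z₁ = KN P := rfl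
  have hKQ : Kd z₁ z₂ = KN Q := rfl
  have hK02 : Kd z₀ z₂ = KN (Hmul P Q) := by rw [Kd, hmul_cocycle z₀ z₁ z₂]
  -- fourth powers
  have e1 : (KN P)^(4:ℕ) = ‖P.1‖^4 + P.2^2 := KN_pow4 P
  have e2 : (KN Q)^(4:ℕ) = ‖Q.1‖^4 + Q.2^2 := KN_pow4 Q
  have e3 : (KN (Hmul P Q))^(4:ℕ) = ‖P.1 + Q.1‖^4 + (P.2 + Q.2 + symp P.1 Q.1 / 2)^2 := by
    have := KN_pow4 (Hmul P Q)
    simpa [Hmul] using this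
  set r : ℝ := (inner ℂ P.1 Q.1 : ℂ).re with hr
  set w : ℝ := symp P.1 Q.1 with hw
  have hadd : ‖P.1 + Q.1‖ ^ 2 = ‖P.1‖ ^ 2 + ‖Q.1‖^2 + 2*r := by
    have := norm_add_sq (𝕜 := ℂ) P.1 Q.1
    simp only [RCLike.re_to_complex] at this
    rw [this, hr]; ring
  have hsub : ‖P.1 - Q.1‖ ^ 2 = ‖P.1‖ ^ 2 + ‖Q.1‖^2 - 2*r := by
    have := norm_sub_sq (𝕜 := ℂ) P.1 Q.1
    simp only [RCLike.re_to_complex] at this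
    rw [this, hr]; ring
  have hCS : r^2 + w^2 ≤ ‖P.1‖^2 * ‖Q.1‖^2 := by
    have h1 := norm_inner_le_norm (𝕜 := ℂ) P.1 Q.1
    have h2 : ‖(inner ℂ P.1 Q.1 : ℂ)‖^2 ≤ (‖P.1‖*‖Q.1‖)^2 :=
      pow_le_pow_left₀ (norm_nonneg _) h1 2
    rw [Complex.sq_norm, Complex.normSq_apply] at h2
    rw [hr, hw, symp]
    nlinarith [h2]
  -- numeric hypotheses
  have q1 : ‖P.1‖^4 + P.2^2 ≤ (1+δ)^4 * s^4 := by
    have hu : KN P ≤ (1+δ)*s := by rw [← hKP]; exact h01u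
    have : (KN P)^(4:ℕ) ≤ ((1+δ)*s)^(4:ℕ) := pow_le_pow_left₀ (KN_nonneg P) hu 4
    rw [e1] at this; nlinarith [this]
  have q3 : ‖Q.1‖^4 + Q.2^2 ≤ (1+δ)^4 * s^4 := by
    have hu : KN Q ≤ (1+δ)*s := by rw [← hKQ]; exact h12u
    have : (KN Q)^(4:ℕ) ≤ ((1+δ)*s)^(4:ℕ) := pow_le_pow_left₀ (KN_nonneg Q) hu 4
    rw [e2] at this; nlinarith [this]
  have q5 : 16 * s^4 ≤ (‖P.1‖^2+‖Q.1‖^2+2*r)^2 + (P.2+Q.2+w/2)^2 := by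
    have hl : 2*s ≤ KN (Hmul P Q) := by rw [← hK02]; exact h02l
    have : (2*s)^(4:ℕ) ≤ (KN (Hmul P Q))^(4:ℕ) := pow_le_pow_left₀ (by linarith) hl 4
    rw [e3] at this
    have h4 : ‖P.1 + Q.1‖^4 = (‖P.1 + Q.1‖^2)^2 := by ring
    rw [h4, hadd] at this
    rw [hw]
    nlinarith [this]
  have hS : 0 ≤ ‖P.1‖^2+‖Q.1‖^2+2*r := by rw [← hadd]; positivity
  have hD : 0 ≤ ‖P.1‖^2+‖Q.1‖^2-2*r := by rw [← hsub]; positivity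
  have hcore := core ‖P.1‖ ‖Q.1‖ P.2 Q.2 r w δ s hδ0 hδ1 hs
    (norm_nonneg _) (norm_nonneg _) q1 q3 q5 hCS hS hD
  have hfin : ‖Q.1 - P.1‖^2 ≤ 80*δ*s^2 := by
    have : ‖Q.1 - P.1‖^2 = ‖P.1‖^2+‖Q.1‖^2-2*r := by
      rw [← norm_neg, neg_sub, hsub]
    linarith [this.le, this.ge, hcore]
  have hsK : s^2 ≤ (Kd z₀ z₁)^2 := by nlinarith [h01l, hs]
  have : ‖Q.1 - P.1‖^2 ≤ 80*δ*(Kd z₀ z₁)^2 := by nlinarith [hfin, hδ0]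
  rw [hxP, hxQ] at this
  exact this

set_option maxHeartbeats 1000000 in
/-- collapse of the tips of a δ-fork with non-degenerate vertical part. -/
theorem stmt_13 (δ : ℝ) (hδ : δ ∈ Set.Ioo (0:ℝ) (10 ^ (-(100:ℤ)) : ℝ))
    (z₀ z₁ z₂ z₂' : H × ℝ)
    (h1 : BiLipP3 δ z₀ z₁ z₂) (h2 : BiLipP3 δ z₀ z₁ z₂')
    (hNH : NH (Hmul (Hinv z₂) z₂') < (1 / 2) * Kd z₂ z₂') :
    Kd z₂ z₂' ≤ 2000 * δ ^ ((1:ℝ)/2) * Kd z₀ z₁ := by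
  obtain ⟨hδ0, hδsmall⟩ := hδ
  have hδ1 : δ < 1 := by
    have : (10:ℝ) ^ (-(100:ℤ)) < 1 := by norm_num
    linarith
  have hKnn : 0 ≤ Kd z₀ z₁ := Kd_nonneg z₀ z₁
  have A1 := forkB δ hδ0 hδ1 z₀ z₁ z₂ h1
  have A2 := forkB δ hδ0 hδ1 z₀ z₁ z₂' h2
  set R : H × ℝ := Hmul (Hinv z₂) z₂' with hR
  have hR1 : R.1 = ((z₂'.1 - z₁.1) - (z₁.1 - z₀.1)) - ((z₂.1 - z₁.1) - (z₁.1 - z₀.1)) := by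
    simp [hR, Hmul, Hinv]; abel
  -- bound on horizontal difference
  have hnorm : ‖R.1‖^2 ≤ 320*δ*(Kd z₀ z₁)^2 := by
    have ht : ‖R.1‖ ≤ ‖(z₂'.1 - z₁.1) - (z₁.1 - z₀.1)‖ + ‖(z₂.1 - z₁.1) - (z₁.1 - z₀.1)‖ := by
      rw [hR1]; exact norm_sub_le _ _
    have h2 : ‖R.1‖^2 ≤ (‖(z₂'.1 - z₁.1) - (z₁.1 - z₀.1)‖ + ‖(z₂.1 - z₁.1) - (z₁.1 - z₀.1)‖)^2 :=
      pow_le_pow_left₀ (norm_nonneg _) ht 2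
    nlinarith [h2, A1, A2,
      sq_nonneg (‖(z₂'.1 - z₁.1) - (z₁.1 - z₀.1)‖ - ‖(z₂.1 - z₁.1) - (z₁.1 - z₀.1)‖)]
  -- vertical part is dominated
  have hKd4 : (Kd z₂ z₂')^(4:ℕ) = ‖R.1‖^4 + R.2^2 := KN_pow4 R
  have habs : |R.2| < (1/4) * (Kd z₂ z₂')^2 := by
    have h0 : 0 ≤ NH R := Real.rpow_nonneg (abs_nonneg _) _
    have hsq : (NH R)^(2:ℕ) = |R.2| := rpow_half_pow _ (abs_nonneg _)
    have hlt : (NH R)^(2:ℕ) < ((1/2) * Kd z₂ z₂')^(2:ℕ) := by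
      apply pow_lt_pow_left₀ hNH h0
      norm_num
    rw [hsq] at hlt
    nlinarith [hlt]
  have hvert : R.2^2 < (1/16) * ((Kd z₂ z₂')^2)^2 := by
    nlinarith [habs, abs_nonneg R.2, sq_abs R.2, sq_nonneg (Kd z₂ z₂')]
  have hmain4 : (Kd z₂ z₂')^(4:ℕ) ≤ (16/15) * (320*δ*(Kd z₀ z₁)^2)^2 := by
    have h4 : ‖R.1‖^4 = (‖R.1‖^2)^2 := by ring
    have hd : ‖R.1‖^4 ≤ (320*δ*(Kd z₀ z₁)^2)^2 := by
      rw [h4]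
      apply pow_le_pow_left₀ (by positivity) hnorm 2
    nlinarith [hKd4, hvert, hd]
  -- conclude
  have hrhs : (0:ℝ) ≤ 2000 * δ ^ ((1:ℝ)/2) * Kd z₀ z₁ := by
    have : (0:ℝ) ≤ δ ^ ((1:ℝ)/2) := Real.rpow_nonneg hδ0.le _
    positivity
  apply le_of_pow_le_pow_left₀ (by norm_num : (4:ℕ) ≠ 0) hrhs
  have hpow : (2000 * δ ^ ((1:ℝ)/2) * Kd z₀ z₁)^(4:ℕ) = 2000^4 * δ^2 * (Kd z₀ z₁)^4 := by
    have : (δ ^ ((1:ℝ)/2))^(4:ℕ) = δ^(2:ℕ) := by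
      rw [← Real.rpow_natCast (δ ^ ((1:ℝ)/2)) 4, ← Real.rpow_mul hδ0.le]
      norm_num
    rw [mul_pow, mul_pow, this]
  rw [hpow]
  nlinarith [hmain4, mul_nonneg (sq_nonneg δ) (sq_nonneg ((Kd z₀ z₁)^2))]
end
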